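/- There exist ε0 > 0 and C > 0, depending only on the model constants, such that for every 0 < ε ≤ ε0 and every nonnegative integrable hazard λ on [0,1] with h²(p_λ, p_{λ0}) ≤ ε², one has H²(λ, λ0) = ∫_0^1 (√(λ(u)) − √(λ0(u)))² du ≤ C·ε². -/

import Mathlib

open MeasureTheory Real Set

noncomputable section

/-- Cumulative hazard `Λ(t) = ∫_0^t λ(u) du`. -/
def cumHaz (lam : ℝ → ℝ) (t : ℝ) : ℝ := ∫ u in (0:ℝ)..t, lam u

/-- Survival function `S(t) = exp(−Λ(t))`. -/
def survF (lam : ℝ → ℝ) (t : ℝ) : ℝ := Real.exp (-(cumHaz lam t))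

/-- `Ḡ(u) = 1 - ∫_0^u g(v) dv`. -/
def Gbar (g : ℝ → ℝ) (u : ℝ) : ℝ := 1 - ∫ v in (0:ℝ)..u, g v

/-- Squared Hellinger distance between the censored-data densities associated with the
hazards `lam` and `lam0`, for censoring density `g`. -/
def hellingerSq (g lam0 lam : ℝ → ℝ) : ℝ :=
  (∫ y in (0:ℝ)..1, (Real.sqrt (g y * survF lam y) - Real.sqrt (g y * survF lam0 y)) ^ 2)
    + (∫ y in (0:ℝ)..1,
        Gbar g y * (Real.sqrt (lam y * survF lam y) - Real.sqrt (lam0 y * survF lam0 y)) ^ 2)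
    + Gbar g 1 * (Real.sqrt (survF lam 1) - Real.sqrt (survF lam0 1)) ^ 2


/-- Pseudo-Hellinger squared distance between two nonnegative functions on `[0,1]`:
`H²(λ1,λ2) = ∫_0^1 (√λ1 − √λ2)²`. -/
def HSq (l1 l2 : ℝ → ℝ) : ℝ := ∫ u in (0:ℝ)..1, (Real.sqrt (l1 u) - Real.sqrt (l2 u)) ^ 2

lemma ae_ne_one : ∀ᵐ y ∂(volume : Measure ℝ), y ≠ 1 := by
  rw [ae_iff]
  have h : {a : ℝ | ¬ a ≠ 1} = {1} := by ext y; simp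
  rw [h]; exact Real.volume_singleton

lemma sq_sqrt_sub_le {p q : ℝ} (hp : 0 ≤ p) (hq : 0 ≤ q) :
    (Real.sqrt p - Real.sqrt q) ^ 2 ≤ 2 * p + 2 * q := by
  nlinarith [Real.sq_sqrt hp, Real.sq_sqrt hq, sq_nonneg (Real.sqrt p + Real.sqrt q)]

lemma cumHaz_mono {lam : ℝ → ℝ} (hI : IntervalIntegrable lam volume 0 1)
    (hnn : ∀ u ∈ Icc (0:ℝ) 1, 0 ≤ lam u) {a b : ℝ} (ha : 0 ≤ a) (hab : a ≤ b) (hb : b ≤ 1) :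
    cumHaz lam a ≤ cumHaz lam b := by
  have hIab : IntervalIntegrable lam volume a b := hI.mono_set
    (by rw [uIcc_of_le hab, uIcc_of_le zero_le_one]; exact Icc_subset_Icc ha hb)
  have hI0a : IntervalIntegrable lam volume 0 a := hI.mono_set
    (by rw [uIcc_of_le ha, uIcc_of_le zero_le_one]; exact Icc_subset_Icc le_rfl (hab.trans hb))
  have hadd := intervalIntegral.integral_add_adjacent_intervals hI0a hIab
  have hpos : 0 ≤ ∫ u in a..b, lam u :=
    intervalIntegral.integral_nonneg hab (fun u hu => hnn u ⟨ha.trans hu.1, hu.2.trans hb⟩)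
  unfold cumHaz
  linarith [hadd]

lemma cumHaz_nonneg {lam : ℝ → ℝ} (hI : IntervalIntegrable lam volume 0 1)
    (hnn : ∀ u ∈ Icc (0:ℝ) 1, 0 ≤ lam u) {y : ℝ} (hy : y ∈ Icc (0:ℝ) 1) :
    0 ≤ cumHaz lam y := by
  have h0 : cumHaz lam 0 = 0 := by unfold cumHaz; simp
  have := cumHaz_mono hI hnn le_rfl hy.1 hy.2
  linarith

lemma survF_le_one {lam : ℝ → ℝ} (hI : IntervalIntegrable lam volume 0 1)
    (hnn : ∀ u ∈ Icc (0:ℝ) 1, 0 ≤ lam u) {y : ℝ} (hy : y ∈ Icc (0:ℝ) 1) :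
    survF lam y ≤ 1 := by
  unfold survF
  rw [Real.exp_le_one_iff]
  linarith [cumHaz_nonneg hI hnn hy]

lemma survF_contOn {lam : ℝ → ℝ} (hI : IntervalIntegrable lam volume 0 1) :
    ContinuousOn (survF lam) (Icc 0 1) := by
  have h1 : IntegrableOn lam (uIcc (0:ℝ) 1) volume := by
    rw [uIcc_of_le zero_le_one, integrableOn_Icc_iff_integrableOn_Ioc]
    exact (intervalIntegrable_iff_integrableOn_Ioc_of_le zero_le_one).1 hI
  have h2 := intervalIntegral.continuousOn_primitive_interval h1
  rw [uIcc_of_le zero_le_one] at h2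
  have : ContinuousOn (fun t => Real.exp (-(∫ u in (0:ℝ)..t, lam u))) (Icc 0 1) :=
    Real.continuous_exp.comp_continuousOn h2.neg
  exact this

lemma aemeas_of_contOn {f : ℝ → ℝ} (h : ContinuousOn f (Icc (0:ℝ) 1)) :
    AEMeasurable f (volume.restrict (Ioc (0:ℝ) 1)) :=
  (h.aemeasurable measurableSet_Icc).mono_measure
    (Measure.restrict_mono Ioc_subset_Icc_self le_rfl)

set_option maxHeartbeats 1000000 in
/-- A small Hellinger distance between the censored-data densities implies a small
pseudo-Hellinger distance `H²(λ, λ0)` between the hazards, with a constant depending only on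
the model constants. -/
theorem hazard_pseudo_hellinger_bound
    (lam0 g : ℝ → ℝ) (c1 c2 c3 c4 : ℝ)
    (hc1 : 0 < c1) (hc3 : 0 < c3)
    (hlam0cont : ContinuousOn lam0 (Set.Icc 0 1))
    (hlam0 : ∀ t ∈ Set.Icc (0:ℝ) 1, c1 ≤ lam0 t ∧ lam0 t ≤ c2)
    (hgmeas : Measurable g)
    (hg : ∀ t ∈ Set.Ico (0:ℝ) 1, c3 ≤ g t ∧ g t ≤ c4)
    (hgint : (∫ v in (0:ℝ)..1, g v) < 1) :
    ∃ ε0 C : ℝ, 0 < ε0 ∧ 0 < C ∧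
      ∀ ε : ℝ, 0 < ε → ε ≤ ε0 →
      ∀ lam : ℝ → ℝ, Measurable lam →
        (∀ u ∈ Set.Icc (0:ℝ) 1, 0 ≤ lam u) →
        IntervalIntegrable lam volume 0 1 →
        hellingerSq g lam0 lam ≤ ε ^ 2 →
        HSq lam lam0 ≤ C * ε ^ 2 := by
  have h01 : (0:ℝ) ≤ 1 := zero_le_one
  have hc2 : 0 < c2 := by
    obtain ⟨h1, h2⟩ := hlam0 0 (by constructor <;> norm_num)
    linarith
  -- positivity of Gbar g 1
  have hG1 : 0 < Gbar g 1 := by unfold Gbar; linarith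
  set G1 : ℝ := Gbar g 1 with hG1def
  set δ : ℝ := Real.exp (-c2) / 4 with hδdef
  have hδ : 0 < δ := by positivity
  -- g is integrable on [0,1]
  have hmemIco : ∀ᵐ y ∂(volume.restrict (Ioc (0:ℝ) 1)), y ∈ Ico (0:ℝ) 1 := by
    filter_upwards [ae_restrict_mem measurableSet_Ioc, ae_restrict_of_ae ae_ne_one]
      with y hy hne
    exact ⟨hy.1.le, lt_of_le_of_ne hy.2 hne⟩
  have hgIoc : IntegrableOn g (Ioc (0:ℝ) 1) volume := by
    refine Integrable.mono' (g := fun _ => c4) (integrableOn_const measure_Ioc_lt_top.ne)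
      hgmeas.aestronglyMeasurable ?_
    filter_upwards [hmemIco] with y hy
    rw [Real.norm_eq_abs, abs_of_nonneg (hc3.le.trans (hg y hy).1)]
    exact (hg y hy).2
  have hgI : IntervalIntegrable g volume 0 1 :=
    (intervalIntegrable_iff_integrableOn_Ioc_of_le h01).2 hgIoc
  -- nonnegativity of ∫_a^b g for 0 ≤ a ≤ b ≤ 1
  have hgseg : ∀ a b : ℝ, 0 ≤ a → a ≤ b → b ≤ 1 → 0 ≤ ∫ v in a..b, g v := by
    intro a b ha hab hb1
    rw [intervalIntegral.integral_of_le hab]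
    refine setIntegral_nonneg_ae measurableSet_Ioc ?_
    filter_upwards [ae_ne_one] with y hyne hymem
    exact hc3.le.trans (hg y ⟨ha.trans hymem.1.le, lt_of_le_of_ne (hymem.2.trans hb1) hyne⟩).1
  -- Gbar bounds on [0,1]
  have hGbar_bd : ∀ y ∈ Icc (0:ℝ) 1, G1 ≤ Gbar g y ∧ Gbar g y ≤ 1 := by
    intro y hy
    have hIy : IntervalIntegrable g volume 0 y := hgI.mono_set
      (by rw [uIcc_of_le hy.1, uIcc_of_le h01]; exact Icc_subset_Icc le_rfl hy.2)
    have hIy1 : IntervalIntegrable g volume y 1 := hgI.mono_set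
      (by rw [uIcc_of_le hy.2, uIcc_of_le h01]; exact Icc_subset_Icc hy.1 le_rfl)
    have hadd := intervalIntegral.integral_add_adjacent_intervals hIy hIy1
    have h1 := hgseg 0 y le_rfl hy.1 hy.2
    have h2 := hgseg y 1 hy.1 hy.2 le_rfl
    constructor
    · rw [hG1def]; unfold Gbar; linarith
    · unfold Gbar; linarith
  -- lam0 facts
  have hl0I : IntervalIntegrable lam0 volume 0 1 :=
    ContinuousOn.intervalIntegrable (by rwa [uIcc_of_le h01])
  have hl0nn : ∀ u ∈ Icc (0:ℝ) 1, 0 ≤ lam0 u := fun u hu => (hc1.le.trans (hlam0 u hu).1)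
  have hcum0_le : ∀ y ∈ Icc (0:ℝ) 1, cumHaz lam0 y ≤ c2 := by
    intro y hy
    have hIy : IntervalIntegrable lam0 volume 0 y := hl0I.mono_set
      (by rw [uIcc_of_le hy.1, uIcc_of_le h01]; exact Icc_subset_Icc le_rfl hy.2)
    have hmono : (∫ u in (0:ℝ)..y, lam0 u) ≤ ∫ u in (0:ℝ)..y, c2 :=
      intervalIntegral.integral_mono_on hy.1 hIy intervalIntegrable_const
        (fun u hu => (hlam0 u ⟨hu.1, hu.2.trans hy.2⟩).2)
    have : (∫ u in (0:ℝ)..y, (c2:ℝ)) = y * c2 := by simp [smul_eq_mul]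
    unfold cumHaz
    calc (∫ u in (0:ℝ)..y, lam0 u) ≤ y * c2 := by rw [← this]; exact hmono
      _ ≤ 1 * c2 := by nlinarith [hy.2, hc2]
      _ = c2 := one_mul c2
  have hS0_lb : ∀ y ∈ Icc (0:ℝ) 1, Real.exp (-c2) ≤ survF lam0 y := by
    intro y hy
    unfold survF
    exact Real.exp_le_exp.2 (by linarith [hcum0_le y hy])
  have hS0_ub : ∀ y ∈ Icc (0:ℝ) 1, survF lam0 y ≤ 1 :=
    fun y hy => survF_le_one hl0I hl0nn hy
  have hS0cont : ContinuousOn (survF lam0) (Icc 0 1) := survF_contOn hl0I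
  have hS0meas : AEMeasurable (survF lam0) (volume.restrict (Ioc (0:ℝ) 1)) :=
    aemeas_of_contOn hS0cont
  have hl0meas : AEMeasurable lam0 (volume.restrict (Ioc (0:ℝ) 1)) :=
    aemeas_of_contOn hlam0cont
  have hl0Ioc : IntegrableOn lam0 (Ioc (0:ℝ) 1) volume :=
    (intervalIntegrable_iff_integrableOn_Ioc_of_le h01).1 hl0I
  -- Gbar continuity / measurability
  have hGbarCont : ContinuousOn (Gbar g) (Icc 0 1) := by
    have h1 : IntegrableOn g (uIcc (0:ℝ) 1) volume := by
      rw [uIcc_of_le h01, integrableOn_Icc_iff_integrableOn_Ioc]; exact hgIoc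
    have h2 := intervalIntegral.continuousOn_primitive_interval h1
    rw [uIcc_of_le h01] at h2
    exact (continuousOn_const.sub h2)
  have hGbarMeas : AEMeasurable (Gbar g) (volume.restrict (Ioc (0:ℝ) 1)) :=
    aemeas_of_contOn hGbarCont
  -- choose constants
  refine ⟨Real.sqrt (G1 * Real.exp (-c2)) / 2, 2 / (δ * G1) + 2 * c2 / (δ * c3),
    by positivity, by positivity, ?_⟩
  intro ε hε hεε0 lam hlamM hlamnn hlamI hHell
  clear_value G1 δ
  -- lam facts
  have hlamIoc : IntegrableOn lam (Ioc (0:ℝ) 1) volume :=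
    (intervalIntegrable_iff_integrableOn_Ioc_of_le h01).1 hlamI
  have hS_ub : ∀ y ∈ Icc (0:ℝ) 1, survF lam y ≤ 1 := fun y hy => survF_le_one hlamI hlamnn hy
  have hS_pos : ∀ y : ℝ, 0 < survF lam y := fun y => Real.exp_pos _
  have hSmono : ∀ y ∈ Icc (0:ℝ) 1, survF lam 1 ≤ survF lam y := by
    intro y hy
    unfold survF
    exact Real.exp_le_exp.2 (by linarith [cumHaz_mono hlamI hlamnn hy.1 hy.2 le_rfl])
  have hSmeas : AEMeasurable (survF lam) (volume.restrict (Ioc (0:ℝ) 1)) :=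
    aemeas_of_contOn (survF_contOn hlamI)
  have hlamAE : AEMeasurable lam (volume.restrict (Ioc (0:ℝ) 1)) := hlamM.aemeasurable
  have hmemIcc : ∀ᵐ y ∂(volume.restrict (Ioc (0:ℝ) 1)), y ∈ Icc (0:ℝ) 1 := by
    filter_upwards [ae_restrict_mem measurableSet_Ioc] with y hy
    exact ⟨hy.1.le, hy.2⟩
  have hmaj : Integrable (fun y => 2 * lam y + 2 * lam0 y) (volume.restrict (Ioc (0:ℝ) 1)) :=
    (hlamIoc.const_mul 2).add (hl0Ioc.const_mul 2)
  have msqrt : Measurable (Real.sqrt) := Real.continuous_sqrt.measurable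
  -- integrability of F
  have mF : AEMeasurable
      (fun y => (Real.sqrt (lam y * survF lam y) - Real.sqrt (lam0 y * survF lam0 y)) ^ 2)
      (volume.restrict (Ioc (0:ℝ) 1)) :=
    (((msqrt.comp_aemeasurable (hlamAE.mul hSmeas)).sub
      (msqrt.comp_aemeasurable (hl0meas.mul hS0meas))).pow aemeasurable_const)
  have intFIoc : IntegrableOn
      (fun y => (Real.sqrt (lam y * survF lam y) - Real.sqrt (lam0 y * survF lam0 y)) ^ 2)
      (Ioc (0:ℝ) 1) volume := by
    refine Integrable.mono' hmaj mF.aestronglyMeasurable ?_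
    filter_upwards [hmemIcc] with y hy
    have h1 : 0 ≤ lam y * survF lam y := mul_nonneg (hlamnn y hy) (hS_pos y).le
    have h2 : 0 ≤ lam0 y * survF lam0 y :=
      mul_nonneg (hl0nn y hy) (Real.exp_pos _).le
    rw [Real.norm_eq_abs, abs_of_nonneg (sq_nonneg _)]
    have := sq_sqrt_sub_le h1 h2
    nlinarith [hS_ub y hy, hS0_ub y hy, hlamnn y hy, hl0nn y hy]
  have intF : IntervalIntegrable
      (fun y => (Real.sqrt (lam y * survF lam y) - Real.sqrt (lam0 y * survF lam0 y)) ^ 2)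
      volume 0 1 := (intervalIntegrable_iff_integrableOn_Ioc_of_le h01).2 intFIoc
  -- integrability of h (survival part)
  have mH : AEMeasurable (fun y => (Real.sqrt (survF lam y) - Real.sqrt (survF lam0 y)) ^ 2)
      (volume.restrict (Ioc (0:ℝ) 1)) :=
    (((msqrt.comp_aemeasurable hSmeas).sub (msqrt.comp_aemeasurable hS0meas)).pow
      aemeasurable_const)
  have intHIoc : IntegrableOn (fun y => (Real.sqrt (survF lam y) - Real.sqrt (survF lam0 y)) ^ 2)
      (Ioc (0:ℝ) 1) volume := by
    refine Integrable.mono' (g := fun _ => (4:ℝ))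
      (integrableOn_const measure_Ioc_lt_top.ne) mH.aestronglyMeasurable ?_
    filter_upwards [hmemIcc] with y hy
    rw [Real.norm_eq_abs, abs_of_nonneg (sq_nonneg _)]
    have := sq_sqrt_sub_le (hS_pos y).le (Real.exp_pos (-(cumHaz lam0 y))).le
    have h1 := hS_ub y hy
    have h2 := hS0_ub y hy
    unfold survF at *
    nlinarith
  have intH : IntervalIntegrable
      (fun y => (Real.sqrt (survF lam y) - Real.sqrt (survF lam0 y)) ^ 2) volume 0 1 :=
    (intervalIntegrable_iff_integrableOn_Ioc_of_le h01).2 intHIoc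
  -- integrability of k
  have mK : AEMeasurable (fun y => (Real.sqrt (lam y) - Real.sqrt (lam0 y)) ^ 2)
      (volume.restrict (Ioc (0:ℝ) 1)) :=
    (((msqrt.comp_aemeasurable hlamAE).sub (msqrt.comp_aemeasurable hl0meas)).pow
      aemeasurable_const)
  have intKIoc : IntegrableOn (fun y => (Real.sqrt (lam y) - Real.sqrt (lam0 y)) ^ 2)
      (Ioc (0:ℝ) 1) volume := by
    refine Integrable.mono' hmaj mK.aestronglyMeasurable ?_
    filter_upwards [hmemIcc] with y hy
    rw [Real.norm_eq_abs, abs_of_nonneg (sq_nonneg _)]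
    exact sq_sqrt_sub_le (hlamnn y hy) (hl0nn y hy)
  have intK : IntervalIntegrable (fun y => (Real.sqrt (lam y) - Real.sqrt (lam0 y)) ^ 2)
      volume 0 1 := (intervalIntegrable_iff_integrableOn_Ioc_of_le h01).2 intKIoc
  -- integrability of the first hellinger integrand
  have mT1 : AEMeasurable
      (fun y => (Real.sqrt (g y * survF lam y) - Real.sqrt (g y * survF lam0 y)) ^ 2)
      (volume.restrict (Ioc (0:ℝ) 1)) :=
    (((msqrt.comp_aemeasurable (hgmeas.aemeasurable.mul hSmeas)).sub
      (msqrt.comp_aemeasurable (hgmeas.aemeasurable.mul hS0meas))).pow aemeasurable_const)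
  have intT1Ioc : IntegrableOn
      (fun y => (Real.sqrt (g y * survF lam y) - Real.sqrt (g y * survF lam0 y)) ^ 2)
      (Ioc (0:ℝ) 1) volume := by
    refine Integrable.mono' (g := fun _ => (4 * c4 : ℝ))
      (integrableOn_const measure_Ioc_lt_top.ne) mT1.aestronglyMeasurable ?_
    filter_upwards [hmemIcc, hmemIco] with y hy hy'
    rw [Real.norm_eq_abs, abs_of_nonneg (sq_nonneg _)]
    have hgnn : 0 ≤ g y := hc3.le.trans (hg y hy').1
    have h1 : 0 ≤ g y * survF lam y := mul_nonneg hgnn (hS_pos y).le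
    have h2 : 0 ≤ g y * survF lam0 y := mul_nonneg hgnn (Real.exp_pos _).le
    have := sq_sqrt_sub_le h1 h2
    nlinarith [hS_ub y hy, hS0_ub y hy, (hg y hy').2, hS_pos y, Real.exp_pos (-(cumHaz lam0 y)),
      hS0_lb y hy]
  have intT1 : IntervalIntegrable
      (fun y => (Real.sqrt (g y * survF lam y) - Real.sqrt (g y * survF lam0 y)) ^ 2)
      volume 0 1 := (intervalIntegrable_iff_integrableOn_Ioc_of_le h01).2 intT1Ioc
  -- integrability of the second hellinger integrand
  have intT2Ioc : IntegrableOn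
      (fun y => Gbar g y *
        (Real.sqrt (lam y * survF lam y) - Real.sqrt (lam0 y * survF lam0 y)) ^ 2)
      (Ioc (0:ℝ) 1) volume := by
    refine Integrable.mono' hmaj (hGbarMeas.mul mF).aestronglyMeasurable ?_
    filter_upwards [hmemIcc] with y hy
    have hGb := hGbar_bd y hy
    have hGnn : 0 ≤ Gbar g y := hG1.le.trans hGb.1
    rw [Real.norm_eq_abs, abs_of_nonneg (mul_nonneg hGnn (sq_nonneg _))]
    have h1 : 0 ≤ lam y * survF lam y := mul_nonneg (hlamnn y hy) (hS_pos y).le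
    have h2 : 0 ≤ lam0 y * survF lam0 y := mul_nonneg (hl0nn y hy) (Real.exp_pos _).le
    have h3 := sq_sqrt_sub_le h1 h2
    nlinarith [hS_ub y hy, hS0_ub y hy, hlamnn y hy, hl0nn y hy, sq_nonneg
      (Real.sqrt (lam y * survF lam y) - Real.sqrt (lam0 y * survF lam0 y))]
  have intT2 : IntervalIntegrable
      (fun y => Gbar g y *
        (Real.sqrt (lam y * survF lam y) - Real.sqrt (lam0 y * survF lam0 y)) ^ 2)
      volume 0 1 := (intervalIntegrable_iff_integrableOn_Ioc_of_le h01).2 intT2Ioc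
  -- nonnegativity of the three terms; each is ≤ ε²
  set T1 : ℝ := ∫ y in (0:ℝ)..1,
    (Real.sqrt (g y * survF lam y) - Real.sqrt (g y * survF lam0 y)) ^ 2 with hT1def
  set T2 : ℝ := ∫ y in (0:ℝ)..1,
    Gbar g y * (Real.sqrt (lam y * survF lam y) - Real.sqrt (lam0 y * survF lam0 y)) ^ 2
    with hT2def
  set T3 : ℝ := Gbar g 1 * (Real.sqrt (survF lam 1) - Real.sqrt (survF lam0 1)) ^ 2 with hT3def
  have hT1nn : 0 ≤ T1 := intervalIntegral.integral_nonneg h01 (fun u _ => sq_nonneg _)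
  have hT2nn : 0 ≤ T2 := intervalIntegral.integral_nonneg h01
    (fun u hu => mul_nonneg (hG1.le.trans (hGbar_bd u hu).1) (sq_nonneg _))
  have hT3nn : 0 ≤ T3 := by
    rw [hT3def, ← hG1def]
    exact mul_nonneg hG1.le (sq_nonneg _)
  have hHell' : T1 + T2 + T3 ≤ ε ^ 2 := hHell
  clear_value T1 T2 T3
  -- ε² bound
  have hε2 : ε ^ 2 ≤ G1 * δ := by
    have h0 : ε ^ 2 ≤ (Real.sqrt (G1 * Real.exp (-c2)) / 2) ^ 2 :=
      pow_le_pow_left₀ hε.le hεε0 2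
    have h1 : (0:ℝ) ≤ G1 * Real.exp (-c2) := by positivity
    have h2 := Real.sq_sqrt h1
    rw [hδdef]
    nlinarith
  -- lower bound on survF lam
  have hSδ : ∀ y ∈ Icc (0:ℝ) 1, δ ≤ survF lam y := by
    have hd2 : (Real.sqrt (survF lam 1) - Real.sqrt (survF lam0 1)) ^ 2 ≤ δ := by
      have hT3le : T3 ≤ G1 * δ := by linarith
      have hT3eq : T3 = G1 * (Real.sqrt (survF lam 1) - Real.sqrt (survF lam0 1)) ^ 2 := by
        rw [hT3def, hG1def]

      rw [hT3eq] at hT3le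
      exact le_of_mul_le_mul_left hT3le hG1
    have he : Real.sqrt (Real.exp (-c2)) ^ 2 = Real.exp (-c2) :=
      Real.sq_sqrt (Real.exp_pos _).le
    have hδe : δ = Real.sqrt (Real.exp (-c2)) ^ 2 / 4 := by rw [hδdef, he]
    have hS01 : Real.sqrt (Real.exp (-c2)) ≤ Real.sqrt (survF lam0 1) :=
      Real.sqrt_le_sqrt (hS0_lb 1 ⟨h01, le_rfl⟩)
    have hS1sq : Real.sqrt (survF lam 1) ^ 2 = survF lam 1 := Real.sq_sqrt (hS_pos 1).le
    have hS1nn : 0 ≤ Real.sqrt (survF lam 1) := Real.sqrt_nonneg _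
    have henn : 0 ≤ Real.sqrt (Real.exp (-c2)) := Real.sqrt_nonneg _
    rw [hδe] at hd2 ⊢
    intro y hy
    have h1 : Real.sqrt (survF lam0 1) - Real.sqrt (survF lam 1) ≤
        Real.sqrt (Real.exp (-c2)) / 2 := by nlinarith
    have h2 : Real.sqrt (Real.exp (-c2)) / 2 ≤ Real.sqrt (survF lam 1) := by linarith
    have h3 : Real.sqrt (Real.exp (-c2)) ^ 2 / 4 ≤ survF lam 1 := by nlinarith
    exact h3.trans (hSmono y hy)
  -- bound A := ∫ F  ≤ ε²/G1
  have hA : (∫ y in (0:ℝ)..1,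
      (Real.sqrt (lam y * survF lam y) - Real.sqrt (lam0 y * survF lam0 y)) ^ 2) ≤
      ε ^ 2 / G1 := by
    have hmono : G1 * (∫ y in (0:ℝ)..1,
        (Real.sqrt (lam y * survF lam y) - Real.sqrt (lam0 y * survF lam0 y)) ^ 2) ≤ T2 := by
      rw [← intervalIntegral.integral_const_mul, hT2def]
      refine intervalIntegral.integral_mono_on h01 (intF.const_mul G1) intT2 ?_
      intro y hy
      exact mul_le_mul_of_nonneg_right (hGbar_bd y hy).1 (sq_nonneg _)
    rw [le_div_iff₀ hG1, mul_comm]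
    linarith
  -- bound B := ∫ h ≤ ε²/c3
  have hB : (∫ y in (0:ℝ)..1,
      (Real.sqrt (survF lam y) - Real.sqrt (survF lam0 y)) ^ 2) ≤ ε ^ 2 / c3 := by
    have hmono : c3 * (∫ y in (0:ℝ)..1,
        (Real.sqrt (survF lam y) - Real.sqrt (survF lam0 y)) ^ 2) ≤ T1 := by
      rw [← intervalIntegral.integral_const_mul, hT1def]
      refine intervalIntegral.integral_mono_ae_restrict h01 (intH.const_mul c3) intT1 ?_
      filter_upwards [ae_restrict_mem measurableSet_Icc, ae_restrict_of_ae ae_ne_one]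
        with y hy hne
      have hyIco : y ∈ Ico (0:ℝ) 1 := ⟨hy.1, lt_of_le_of_ne hy.2 hne⟩
      have hgnn : 0 ≤ g y := hc3.le.trans (hg y hyIco).1
      rw [Real.sqrt_mul hgnn, Real.sqrt_mul hgnn]
      have hgq := Real.sq_sqrt hgnn
      have hc3g := (hg y hyIco).1
      nlinarith [sq_nonneg (Real.sqrt (survF lam y) - Real.sqrt (survF lam0 y))]
    rw [le_div_iff₀ hc3, mul_comm]
    linarith
  -- pointwise key inequality and conclusion
  have hkey : ∀ y ∈ Icc (0:ℝ) 1,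
      (Real.sqrt (lam y) - Real.sqrt (lam0 y)) ^ 2 ≤
      (2 / δ) * (Real.sqrt (lam y * survF lam y) - Real.sqrt (lam0 y * survF lam0 y)) ^ 2 +
      (2 * c2 / δ) * (Real.sqrt (survF lam y) - Real.sqrt (survF lam0 y)) ^ 2 := by
    intro y hy
    set a := Real.sqrt (lam y)
    set b := Real.sqrt (lam0 y)
    set s := Real.sqrt (survF lam y)
    set s0 := Real.sqrt (survF lam0 y)
    have hra : Real.sqrt (lam y * survF lam y) = a * s := Real.sqrt_mul (hlamnn y hy) _
    have hrb : Real.sqrt (lam0 y * survF lam0 y) = b * s0 := Real.sqrt_mul (hl0nn y hy) _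
    rw [hra, hrb]
    have hs2 : s ^ 2 = survF lam y := Real.sq_sqrt (hS_pos y).le
    have hb2 : b ^ 2 = lam0 y := Real.sq_sqrt (hl0nn y hy)
    have hb2le : b ^ 2 ≤ c2 := by rw [hb2]; exact (hlam0 y hy).2
    have hsδ : δ ≤ s ^ 2 := by rw [hs2]; exact hSδ y hy
    have e1 : δ * (a - b) ^ 2 ≤ s ^ 2 * (a - b) ^ 2 :=
      mul_le_mul_of_nonneg_right hsδ (sq_nonneg _)
    have e3 : (a * s - b * s) ^ 2 ≤ 2 * (a * s - b * s0) ^ 2 + 2 * (b * s0 - b * s) ^ 2 := by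
      nlinarith [sq_nonneg ((a * s - b * s0) - (b * s0 - b * s))]
    have e5 : (b * s0 - b * s) ^ 2 ≤ c2 * (s - s0) ^ 2 := by
      have : (b * s0 - b * s) ^ 2 = b ^ 2 * (s - s0) ^ 2 := by ring
      rw [this]
      exact mul_le_mul_of_nonneg_right hb2le (sq_nonneg _)
    have e2 : s ^ 2 * (a - b) ^ 2 = (a * s - b * s) ^ 2 := by ring
    have halmost : δ * (a - b) ^ 2 ≤ 2 * (a * s - b * s0) ^ 2 + 2 * c2 * (s - s0) ^ 2 := by
      nlinarith
    rw [div_mul_eq_mul_div, div_mul_eq_mul_div, ← add_div, le_div_iff₀ hδ]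
    nlinarith
  have hfinal : HSq lam lam0 ≤
      (2 / δ) * (∫ y in (0:ℝ)..1,
        (Real.sqrt (lam y * survF lam y) - Real.sqrt (lam0 y * survF lam0 y)) ^ 2) +
      (2 * c2 / δ) * (∫ y in (0:ℝ)..1,
        (Real.sqrt (survF lam y) - Real.sqrt (survF lam0 y)) ^ 2) := by
    unfold HSq
    rw [← intervalIntegral.integral_const_mul, ← intervalIntegral.integral_const_mul,
      ← intervalIntegral.integral_add ((intF.const_mul _)) ((intH.const_mul _))]
    exact intervalIntegral.integral_mono_on h01 intK
      ((intF.const_mul _).add (intH.const_mul _)) hkey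
  have hAB : (2 / δ) * (∫ y in (0:ℝ)..1,
        (Real.sqrt (lam y * survF lam y) - Real.sqrt (lam0 y * survF lam0 y)) ^ 2) +
      (2 * c2 / δ) * (∫ y in (0:ℝ)..1,
        (Real.sqrt (survF lam y) - Real.sqrt (survF lam0 y)) ^ 2) ≤
      (2 / (δ * G1) + 2 * c2 / (δ * c3)) * ε ^ 2 := by
    have h1 : (2 / δ) * (∫ y in (0:ℝ)..1,
        (Real.sqrt (lam y * survF lam y) - Real.sqrt (lam0 y * survF lam0 y)) ^ 2) ≤
        (2 / δ) * (ε ^ 2 / G1) := by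
      apply mul_le_mul_of_nonneg_left hA (by positivity)
    have h2 : (2 * c2 / δ) * (∫ y in (0:ℝ)..1,
        (Real.sqrt (survF lam y) - Real.sqrt (survF lam0 y)) ^ 2) ≤
        (2 * c2 / δ) * (ε ^ 2 / c3) := by
      apply mul_le_mul_of_nonneg_left hB (by positivity)
    have heq : (2 / δ) * (ε ^ 2 / G1) + (2 * c2 / δ) * (ε ^ 2 / c3) =
        (2 / (δ * G1) + 2 * c2 / (δ * c3)) * ε ^ 2 := by
      field_simp
    linarith
  linarith

end
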